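/- With E a centered bimodule, g a pseudo-Riemannian bilinear metric and σ the canonical flip, V_{g⁽²⁾}(σ(ω ⊗ η)) = V_{g⁽²⁾}(ω ⊗ η) ∘ σ for all ω, η ∈ E; equivalently the symmetrization idempotent P_sym = (1+σ)/2 is self-adjoint with respect to g⁽²⁾. -/

import Mathlib

open MulOpposite

/-- With `E` a centered bimodule, `g` a pseudo-Riemannian bilinear metric
and `σ` the canonical flip on `E ⊗_A E`, one has
`V_{g⁽²⁾}(σ(ω ⊗ η)) = V_{g⁽²⁾}(ω ⊗ η) ∘ σ` for all `ω, η ∈ E`, i.e.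
`g⁽²⁾(σ(ω ⊗ η) ⊗ y) = g⁽²⁾((ω ⊗ η) ⊗ σ(y))` for all `y ∈ E ⊗_A E`; equivalently the
symmetrization idempotent `P_sym = (1+σ)/2` is self-adjoint with respect to `g⁽²⁾`.
Here `T` with `tmul` plays the role of `E ⊗_A E` (additively generated by the simple
tensors), and `σ` is the canonical flip, determined by flipping central simple tensors. -/
theorem Psym_selfadjoint_wrt_g2
    {A E T : Type*} [Ring A] [AddCommGroup E] [Module A E] [Module Aᵐᵒᵖ E]
    [SMulCommClass A Aᵐᵒᵖ E]
    [AddCommGroup T] [Module A T] [Module Aᵐᵒᵖ T] [SMulCommClass A Aᵐᵒᵖ T]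
    (hcent : Submodule.span Aᵐᵒᵖ {e : E | ∀ b : A, b • e = op b • e} = ⊤)
    (tmul : E → E → T)
    (htl : ∀ e e' f : E, tmul (e + e') f = tmul e f + tmul e' f)
    (htr : ∀ e f f' : E, tmul e (f + f') = tmul e f + tmul e f')
    (htbal : ∀ (a : A) (e f : E), tmul (op a • e) f = tmul e (a • f))
    (htA : ∀ (a : A) (e f : E), a • tmul e f = tmul (a • e) f)
    (htAop : ∀ (a : A) (e f : E), op a • tmul e f = tmul e (op a • f))
    (hgen : AddSubgroup.closure {x : T | ∃ e f : E, x = tmul e f} = ⊤)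
    (σ : T → T)
    (hσadd : ∀ x y : T, σ (x + y) = σ x + σ y)
    (hσA : ∀ (a : A) (x : T), σ (a • x) = a • σ x)
    (hσAop : ∀ (a : A) (x : T), σ (op a • x) = op a • σ x)
    (hσflip : ∀ ω η : E, (∀ b : A, b • ω = op b • ω) → (∀ b : A, b • η = op b • η) →
        σ (tmul ω η) = tmul η ω)
    (g : E → E → A)
    (hgaddl : ∀ e e' f, g (e + e') f = g e f + g e' f)
    (hgaddr : ∀ e f f', g e (f + f') = g e f + g e f')
    (hgbal : ∀ (a : A) (e f : E), g (op a • e) f = g e (a • f))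
    (hgA : ∀ (a : A) (e f : E), g (a • e) f = a * g e f)
    (hgAop : ∀ (a : A) (e f : E), g e (op a • f) = g e f * a)
    (hgsym : ∀ ω η : E, (∀ b : A, b • ω = op b • ω) → (∀ b : A, b • η = op b • η) →
      ∀ a : A, g ω (op a • η) = g η (op a • ω))
    (g2 : T → T → A)
    (hg2addl : ∀ x x' y : T, g2 (x + x') y = g2 x y + g2 x' y)
    (hg2addr : ∀ x y y' : T, g2 x (y + y') = g2 x y + g2 x y')
    (hg2def : ∀ e f e' f' : E,
      g2 (tmul e f) (tmul e' f') = g e ((g f e') • f')) :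
    ∀ (ω η : E) (y : T), g2 (σ (tmul ω η)) y = g2 (tmul ω η) (σ y) := by
  -- abbreviation for centrality
  set C : Set E := {e : E | ∀ b : A, b • e = op b • e} with hC
  -- basic zero/neg lemmas
  have tmul0l : ∀ f : E, tmul 0 f = 0 := by
    intro f; have h := htl 0 0 f; rw [add_zero] at h; exact left_eq_add.mp h
  have tmul0r : ∀ e : E, tmul e 0 = 0 := by
    intro e; have h := htr e 0 0; rw [add_zero] at h; exact left_eq_add.mp h
  have g2zl : ∀ y : T, g2 0 y = 0 := by
    intro y; have h := hg2addl 0 0 y; rw [add_zero] at h; exact left_eq_add.mp h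
  have g2zr : ∀ x : T, g2 x 0 = 0 := by
    intro x; have h := hg2addr x 0 0; rw [add_zero] at h; exact left_eq_add.mp h
  have g2negl : ∀ x y : T, g2 (-x) y = - g2 x y := by
    intro x y
    have h := hg2addl x (-x) y; rw [add_neg_cancel, g2zl] at h
    exact eq_neg_of_add_eq_zero_right h.symm
  have g2negr : ∀ x y : T, g2 x (-y) = - g2 x y := by
    intro x y
    have h := hg2addr x y (-y); rw [add_neg_cancel, g2zr] at h
    exact eq_neg_of_add_eq_zero_right h.symm
  have σ0 : σ 0 = 0 := by
    have h := hσadd 0 0; rw [add_zero] at h; exact left_eq_add.mp h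
  have σneg : ∀ x : T, σ (-x) = - σ x := by
    intro x
    have h := hσadd x (-x); rw [add_neg_cancel, σ0] at h
    exact (neg_eq_of_add_eq_zero_right h.symm).symm
  -- g of two central elements is central in A
  have gcent : ∀ ω' η', ω' ∈ C → η' ∈ C → ∀ c : A, c * g ω' η' = g ω' η' * c := by
    intro ω' η' hω' hη' c
    calc c * g ω' η' = g (c • ω') η' := (hgA c ω' η').symm
      _ = g (op c • ω') η' := by rw [hω' c]
      _ = g ω' (c • η') := hgbal c ω' η'
      _ = g ω' (op c • η') := by rw [hη' c]
      _ = g ω' η' * c := hgAop c ω' η'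
  -- scalar collapse on a central element
  have smulc : ∀ (η' : E), η' ∈ C → ∀ (c b : A), c • (op b • η') = op (c * b) • η' := by
    intro η' hη' c b
    rw [smul_comm, hη' c, smul_smul, ← op_mul]
  -- the core identity on fully reduced simple tensors
  have core : ∀ ω' η' ρ τ, ω' ∈ C → η' ∈ C → ρ ∈ C → τ ∈ C → ∀ a b : A,
      g2 (tmul η' (op a • ω')) (tmul ρ (op b • τ))
        = g2 (tmul ω' (op a • η')) (tmul τ (op b • ρ)) := by
    intro ω' η' ρ τ hω' hη' hρ hτ a b
    rw [hg2def, hg2def]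
    have h1 : g (op a • ω') ρ = g ω' ρ * a := by
      rw [hgbal, hρ a, hgAop]
    have h2 : g (op a • η') τ = g η' τ * a := by
      rw [hgbal, hτ a, hgAop]
    rw [h1, h2, smulc τ hτ, smulc ρ hρ, hgAop, hgAop]
    calc g η' τ * (g ω' ρ * a * b)
        = g η' τ * g ω' ρ * a * b := by rw [mul_assoc, mul_assoc, mul_assoc]
      _ = g ω' ρ * g η' τ * a * b := by rw [gcent η' τ hη' hτ (g ω' ρ)]
      _ = g ω' ρ * (g η' τ * a * b) := by rw [mul_assoc, mul_assoc, mul_assoc]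
  -- generation: every element of T lies in the closure of reduced simple tensors
  set S0 : Set T := {x : T | ∃ (ω' η' : E) (a : A), ω' ∈ C ∧ η' ∈ C ∧ x = tmul ω' (op a • η')} with hS0
  have genred : ∀ x : T, x ∈ AddSubgroup.closure S0 := by
    have step : ∀ e f : E, tmul e f ∈ AddSubgroup.closure S0 := by
      have inner : ∀ ω', ω' ∈ C → ∀ f : E, ∀ b : A,
          tmul ω' (op b • f) ∈ AddSubgroup.closure S0 := by
        intro ω' hω' f
        have hf : f ∈ Submodule.span Aᵐᵒᵖ C := by rw [hcent]; trivial
        induction hf using Submodule.span_induction with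
        | mem x hx => intro b; exact AddSubgroup.subset_closure ⟨ω', x, b, hω', hx, rfl⟩
        | zero => intro b; rw [smul_zero, tmul0r]; exact zero_mem _
        | add x y _ _ hx hy =>
            intro b; rw [smul_add, htr]; exact add_mem (hx b) (hy b)
        | smul c x _ hx =>
            intro b
            obtain ⟨c, rfl⟩ : ∃ c', c = op c' := ⟨c.unop, rfl⟩
            have : (op b : Aᵐᵒᵖ) • (op c : Aᵐᵒᵖ) • x = op (c * b) • x := by
              rw [smul_smul, ← op_mul]
            rw [this]
            exact hx (c * b)
      intro e
      have he : e ∈ Submodule.span Aᵐᵒᵖ C := by rw [hcent]; trivial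
      induction he using Submodule.span_induction with
      | mem x hx =>
          intro f
          have := inner x hx f 1
          rwa [op_one, one_smul] at this
      | zero => intro f; rw [tmul0l]; exact zero_mem _
      | add x y _ _ hx hy => intro f; rw [htl]; exact add_mem (hx f) (hy f)
      | smul c x _ hx =>
          intro f
          obtain ⟨c, rfl⟩ : ∃ c', c = op c' := ⟨c.unop, rfl⟩
          rw [htbal]
          exact hx (c • f)
    intro x
    have hx : x ∈ AddSubgroup.closure {x : T | ∃ e f : E, x = tmul e f} := by
      rw [hgen]; trivial
    induction hx using AddSubgroup.closure_induction with
    | mem x hx => obtain ⟨e, f, rfl⟩ := hx; exact step e f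
    | zero => exact zero_mem _
    | add x y _ _ hx hy => exact add_mem hx hy
    | neg x _ hx => exact neg_mem hx
  -- flip of a reduced simple tensor
  have σred : ∀ ω' η', ω' ∈ C → η' ∈ C → ∀ a : A,
      σ (tmul ω' (op a • η')) = tmul η' (op a • ω') := by
    intro ω' η' hω' hη' a
    rw [← htAop, hσAop, hσflip ω' η' hω' hη', htAop]
  -- key lemma: reduced simple tensors satisfy the adjointness in the second slot
  have key : ∀ ω' η', ω' ∈ C → η' ∈ C → ∀ a : A, ∀ y : T,
      g2 (tmul η' (op a • ω')) y = g2 (tmul ω' (op a • η')) (σ y) := by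
    intro ω' η' hω' hη' a y
    have hy := genred y
    induction hy using AddSubgroup.closure_induction with
    | mem x hx =>
        obtain ⟨ρ, τ, b, hρ, hτ, rfl⟩ := hx
        rw [σred ρ τ hρ hτ b]
        exact core ω' η' ρ τ hω' hη' hρ hτ a b
    | zero => rw [σ0, g2zr, g2zr]
    | add x y _ _ hx hy => rw [hσadd, hg2addr, hg2addr, hx, hy]
    | neg x _ hx => rw [σneg, g2negr, g2negr, hx]
  -- main statement for all x in T
  have main : ∀ x : T, ∀ y : T, g2 (σ x) y = g2 x (σ y) := by
    intro x
    have hx := genred x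
    induction hx using AddSubgroup.closure_induction with
    | mem x hx =>
        obtain ⟨ω', η', a, hω', hη', rfl⟩ := hx
        intro y
        rw [σred ω' η' hω' hη' a]
        exact key ω' η' hω' hη' a y
    | zero => intro y; rw [σ0, g2zl, g2zl]
    | add x z _ _ hx hz => intro y; rw [hσadd, hg2addl, hg2addl, hx, hz]
    | neg x _ hx => intro y; rw [σneg, g2negl, g2negl, hx]
  intro ω η y
  exact main (tmul ω η) y
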